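/- The function μ(A) = Σ_{n≥1} 2^{−n} diam(f_n(A)), with f_n(x) = 1/(1 + d(x_n,x)) for a dense sequence (x_n) in a continuum X, is strictly monotone on 2^X: if A ⊊ B are nonempty closed subsets of X, then μ(A) < μ(B). -/

import Mathlib

open Metric

private lemma whitney_aux_mem {X : Type*} [MetricSpace X] (p x : X) :
    1 / (1 + dist p x) ∈ Set.Icc (0 : ℝ) 1 := by
  have h : (0:ℝ) < 1 + dist p x := by positivity
  constructor
  · positivity
  · rw [div_le_one h]; linarith [dist_nonneg (x := p) (y := x)]

/-- The function `μ(A) = Σ_{n≥1} 2^{-n} diam (f_n '' A)`, with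
`f_n(x) = 1/(1 + d(x_n, x))` for a dense sequence `(x_n)` in a continuum `X`, is
strictly monotone: if `A ⊊ B` are nonempty closed subsets of `X`, then `μ A < μ B`. -/
theorem whitney_formula_strict_mono
    {X : Type*} [MetricSpace X] [CompactSpace X] [ConnectedSpace X] [Nonempty X]
    (xs : ℕ → X) (hdense : DenseRange xs)
    (μ : Set X → ℝ)
    (hμ : ∀ A : Set X, μ A =
      ∑' n : ℕ, (1 / 2 : ℝ) ^ (n + 1) *
        Metric.diam ((fun x => 1 / (1 + dist (xs n) x)) '' A))
    (A B : Set X) (hA : A.Nonempty) (hAc : IsClosed A)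
    (hB : B.Nonempty) (hBc : IsClosed B) (hAB : A ⊂ B) :
    μ A < μ B := by
  classical
  -- basic facts about the images
  have hsub : ∀ (m : ℕ) (S : Set X),
      (fun x => 1 / (1 + dist (xs m) x)) '' S ⊆ Set.Icc (0 : ℝ) 1 := by
    rintro m S y ⟨x, -, rfl⟩
    exact whitney_aux_mem _ _
  have hbdd : ∀ (m : ℕ) (S : Set X),
      Bornology.IsBounded ((fun x => 1 / (1 + dist (xs m) x)) '' S) :=
    fun m S => (isBounded_Icc (0:ℝ) 1).subset (hsub m S)
  have hdiam1 : ∀ (m : ℕ) (S : Set X),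
      Metric.diam ((fun x => 1 / (1 + dist (xs m) x)) '' S) ≤ 1 := by
    intro m S
    calc Metric.diam ((fun x => 1 / (1 + dist (xs m) x)) '' S)
        ≤ Metric.diam (Set.Icc (0:ℝ) 1) := diam_mono (hsub m S) (isBounded_Icc 0 1)
      _ = 1 := by rw [Real.diam_Icc (by norm_num)]; norm_num
  -- summability
  have hsummable : ∀ S : Set X, Summable (fun m : ℕ => (1 / 2 : ℝ) ^ (m + 1) *
      Metric.diam ((fun x => 1 / (1 + dist (xs m) x)) '' S)) := by
    intro S
    apply Summable.of_nonneg_of_le (f := fun m : ℕ => (1 / 2 : ℝ) ^ (m + 1))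
    · intro m
      have := diam_nonneg (s := (fun x => 1 / (1 + dist (xs m) x)) '' S)
      positivity
    · intro m
      have h1 := hdiam1 m S
      have h2 : (0:ℝ) < (1/2:ℝ)^(m+1) := by positivity
      nlinarith [diam_nonneg (s := (fun x => 1 / (1 + dist (xs m) x)) '' S)]
    · simp_rw [pow_succ]
      exact summable_geometric_two.mul_right _
  -- pick a point of B not in A
  obtain ⟨b, hbB, hbA⟩ := Set.not_subset.mp hAB.2
  set δ := infDist b A with hδdef
  have hδ : 0 < δ := (hAc.notMem_iff_infDist_pos hA).mp hbA
  -- pick n with xs n close to b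
  obtain ⟨n, hn⟩ := Metric.denseRange_iff.mp hdense b (δ / 3) (by linarith)
  rw [dist_comm] at hn
  set f : X → ℝ := fun x => 1 / (1 + dist (xs n) x) with hf
  have hfc : Continuous f := by
    apply Continuous.div continuous_const
      (continuous_const.add (continuous_const.dist continuous_id))
    intro x; show (1:ℝ) + dist (xs n) x ≠ 0; positivity
  -- bounds
  have hfb : 1 / (1 + δ / 3) < f b := by
    apply div_lt_div_of_pos_left one_pos (by positivity)
    linarith
  have hfa : ∀ a ∈ A, f a ≤ 1 / (1 + 2 * δ / 3) := by
    intro a ha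
    have h1 : δ ≤ dist b a := infDist_le_dist_of_mem ha
    have h2 : dist b a ≤ dist b (xs n) + dist (xs n) a := dist_triangle _ _ _
    rw [dist_comm b (xs n)] at h2
    have h3 : 2 * δ / 3 ≤ dist (xs n) a := by linarith
    apply div_le_div_of_nonneg_left one_pos.le (by positivity)
    linarith
  set c : ℝ := 1 / (1 + δ / 3) - 1 / (1 + 2 * δ / 3) with hc
  have hcpos : 0 < c := by
    rw [hc]
    have : (1:ℝ) / (1 + 2 * δ / 3) < 1 / (1 + δ / 3) :=
      div_lt_div_of_pos_left one_pos (by positivity) (by linarith)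
    linarith
  -- the compact image of A
  have hAcp : IsCompact A := hAc.isCompact
  have hsA : IsCompact (f '' A) := hAcp.image hfc
  have hsAne : (f '' A).Nonempty := hA.image f
  obtain ⟨a₁, ha₁, hMa⟩ := hsA.sSup_mem hsAne
  obtain ⟨a₂, ha₂, hma⟩ := hsA.sInf_mem hsAne
  have hbddA := hsA.bddAbove
  have hbddB := hsA.bddBelow
  -- diam (f '' A) ≤ sSup - sInf
  have hdiamA : Metric.diam (f '' A) ≤ sSup (f '' A) - sInf (f '' A) := by
    apply diam_le_of_forall_dist_le
    · have h1 : sInf (f '' A) ≤ sSup (f '' A) := csInf_le_csSup hsAne hbddB hbddA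
      linarith
    · intro u hu v hv
      rw [Real.dist_eq, abs_sub_le_iff]
      constructor
      · linarith [le_csSup hbddA hu, csInf_le hbddB hv]
      · linarith [le_csSup hbddA hv, csInf_le hbddB hu]
  -- key strict inequality at index n
  have hkey : Metric.diam (f '' A) + c < Metric.diam (f '' B) := by
    have hM : sSup (f '' A) ≤ 1 / (1 + 2 * δ / 3) := hMa ▸ hfa a₁ ha₁
    have hfbM : sSup (f '' A) + c < f b := by rw [hc]; linarith
    have hmem1 : f b ∈ f '' B := ⟨b, hbB, rfl⟩
    have hmem2 : sInf (f '' A) ∈ f '' B := by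
      rw [← hma]; exact ⟨a₂, hAB.1 ha₂, rfl⟩
    have h1 : dist (f b) (sInf (f '' A)) ≤ Metric.diam (f '' B) :=
      dist_le_diam_of_mem (hbdd n B) hmem1 hmem2
    have h2 : sInf (f '' A) ≤ sSup (f '' A) := csInf_le_csSup hsAne hbddB hbddA
    rw [Real.dist_eq, abs_of_nonneg (by linarith [hcpos])] at h1
    linarith
  -- conclude
  rw [hμ A, hμ B]
  apply Summable.tsum_lt_tsum (i := n) _ _ (hsummable A) (hsummable B)
  · intro m
    have h2 : (0:ℝ) ≤ (1/2:ℝ)^(m+1) := by positivity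
    exact mul_le_mul_of_nonneg_left
      (diam_mono (Set.image_mono hAB.1) (hbdd m B)) h2
  · have h2 : (0:ℝ) < (1/2:ℝ)^(n+1) := by positivity
    exact mul_lt_mul_of_pos_left (by linarith [hkey]) h2
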